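/- For all natural numbers m, n, k and every natural number p with p ≤ n, one has C(m, n, k) = Σ_{i=0}^{p} binom(p, i) · C(m + i, n - p, k). -/
import Mathlib


open Finset

/-- The set of ternary words of length `m + n` (as functions `Fin (m+n) → Fin 3`)
having exactly `k` letters equal to `2` and no letter equal to `0` among the
first `m` letters. -/
def ternaryWords (m n k : ℕ) : Finset (Fin (m + n) → Fin 3) :=
  univ.filter fun w =>
    (univ.filter fun i => w i = 2).card = k ∧ ∀ i : Fin (m + n), (i : ℕ) < m → w i ≠ 0

/-- `C m n k` is the number of ternary words of length `m + n` with exactly `k`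
twos and no zero among the first `m` letters; it equals the inset number
`{m,n choose k}` of Janjić–Petković. -/
def C (m n k : ℕ) : ℕ := (ternaryWords m n k).card

/-! ### Auxiliary counting machinery -/

/-- Number of twos in a ternary word. -/
def twosCount {N : ℕ} (w : Fin N → Fin 3) : ℕ := (univ.filter fun i => w i = 2).card

/-- Words with exactly `k` twos avoiding `0` on a constraint set `T`. -/
def Wset (N k : ℕ) (T : Finset (Fin N)) : Finset (Fin N → Fin 3) :=
  univ.filter fun w => twosCount w = k ∧ ∀ i ∈ T, w i ≠ 0

/-- Words with exactly `k - 1` twos (phrased additively) avoiding `0` on `T`. -/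
def Bset (N k : ℕ) (T : Finset (Fin N)) : Finset (Fin N → Fin 3) :=
  univ.filter fun w => twosCount w + 1 = k ∧ ∀ i ∈ T, w i ≠ 0

lemma twos_comp {N : ℕ} (w : Fin N → Fin 3) (σ : Equiv.Perm (Fin N)) :
    twosCount (w ∘ σ) = twosCount w := by
  unfold twosCount
  apply Finset.card_nbij (fun i => σ i)
  · intro a ha; simp_all
  · intro a ha b hb h; simpa using σ.injective h
  · intro b hb
    refine ⟨σ.symm b, ?_, by simp⟩
    simp_all

lemma Wset_card_comp (N k : ℕ) (T : Finset (Fin N)) (σ : Equiv.Perm (Fin N)) :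
    (Wset N k (T.image σ)).card = (Wset N k T).card := by
  apply Finset.card_bij' (fun w _ => w ∘ σ) (fun w _ => w ∘ σ.symm)
  · intro w hw
    simp only [Wset, mem_filter, mem_univ, true_and] at hw ⊢
    exact ⟨by rw [twos_comp]; exact hw.1,
      fun i hi => hw.2 (σ i) (Finset.mem_image_of_mem _ hi)⟩
  · intro w hw
    simp only [Wset, mem_filter, mem_univ, true_and] at hw ⊢
    refine ⟨by rw [twos_comp]; exact hw.1, fun i hi => ?_⟩
    obtain ⟨j, hj, rfl⟩ := Finset.mem_image.1 hi
    simpa using hw.2 j hj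
  · intro w _; ext i; simp
  · intro w _; ext i; simp

/-- The count only depends on the cardinality of the constraint set. -/
lemma Wset_card_eq (N k : ℕ) (S T : Finset (Fin N)) (h : S.card = T.card) :
    (Wset N k S).card = (Wset N k T).card := by
  classical
  have e : {x // x ∈ T} ≃ {x // x ∈ S} := by
    apply Fintype.equivOfCardEq
    simp [Fintype.card_coe, h]
  have hσ : S = T.image e.extendSubtype := by
    apply Finset.eq_of_subset_of_card_le ?_ ?_ |>.symm
    · intro x hx
      obtain ⟨j, hj, rfl⟩ := Finset.mem_image.1 hx
      rw [e.extendSubtype_apply_of_mem j hj]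
      exact (e ⟨j, hj⟩).2
    · rw [Finset.card_image_of_injective _ e.extendSubtype.injective, h]
  rw [hσ, Wset_card_comp]

lemma twos_cons {N : ℕ} (v : Fin 3) (u : Fin N → Fin 3) :
    twosCount (Fin.cons v u : Fin (N+1) → Fin 3) = (if v = 2 then 1 else 0) + twosCount u := by
  unfold twosCount
  rw [Finset.card_filter, Finset.card_filter, Fin.sum_univ_succ]
  simp [Fin.cons_zero, Fin.cons_succ]

lemma card_fiber {N : ℕ} (v : Fin 3) (Q : (Fin (N+1) → Fin 3) → Prop) [DecidablePred Q] :
    ((univ.filter Q).filter fun w => w 0 = v).card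
      = (univ.filter fun u : Fin N → Fin 3 => Q (Fin.cons v u)).card := by
  refine Finset.card_bij' (fun w _ => Fin.tail w) (fun u _ => Fin.cons v u) ?_ ?_ ?_ ?_
  · intro w hw
    simp only [mem_filter, mem_univ, true_and] at hw ⊢
    rw [show (Fin.cons v (Fin.tail w)) = w by
      ext i
      induction i using Fin.cases with
      | zero => simp [hw.2]
      | succ j => simp [Fin.tail]]
    exact hw.1
  · intro u hu
    simp only [mem_filter, mem_univ, true_and] at hu ⊢
    exact ⟨hu, by simp⟩
  · intro w hw
    simp only [mem_filter, mem_univ, true_and] at hw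
    ext i
    induction i using Fin.cases with
    | zero => simp [hw.2]
    | succ j => simp [Fin.tail]
  · intro u _
    ext i; simp [Fin.tail]

lemma cons_constraint {N : ℕ} (v : Fin 3) (u : Fin N → Fin 3) (T : Finset (Fin (N+1))) :
    (∀ i ∈ T, (Fin.cons v u : Fin (N+1) → Fin 3) i ≠ 0) ↔
      (((0 : Fin (N+1)) ∈ T → v ≠ 0) ∧ ∀ i ∈ univ.filter (fun i : Fin N => i.succ ∈ T), u i ≠ 0) := by
  constructor
  · intro h
    refine ⟨fun h0 => by simpa using h 0 h0, fun i hi => ?_⟩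
    simp only [mem_filter] at hi
    have := h i.succ hi.2
    rwa [Fin.cons_succ] at this
  · rintro ⟨h0, hs⟩ i hi
    induction i using Fin.cases with
    | zero => rw [Fin.cons_zero]; exact h0 hi
    | succ j =>
      rw [Fin.cons_succ]
      exact hs j (by simp [hi])

/-- Splitting a word at its first letter. -/
lemma Wset_card_split (N k : ℕ) (T : Finset (Fin (N+1))) :
    (Wset (N+1) k T).card =
      (if (0 : Fin (N+1)) ∈ T then 1 else 2) *
          (Wset N k (univ.filter fun i : Fin N => i.succ ∈ T)).card
        + (Bset N k (univ.filter fun i : Fin N => i.succ ∈ T)).card := by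
  classical
  set T' := univ.filter fun i : Fin N => i.succ ∈ T with hT'
  have hsplit : (Wset (N+1) k T).card
      = ∑ v : Fin 3, ((Wset (N+1) k T).filter fun w => w 0 = v).card :=
    Finset.card_eq_sum_card_fiberwise (fun x _ => mem_univ _)
  have hval : ∀ v : Fin 3,
      ((Wset (N+1) k T).filter fun w => w 0 = v).card
        = (univ.filter fun u : Fin N → Fin 3 =>
            ((if v = 2 then 1 else 0) + twosCount u = k) ∧
            (((0 : Fin (N+1)) ∈ T → v ≠ 0) ∧ ∀ i ∈ T', u i ≠ 0)).card := by
    intro v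
    rw [show Wset (N+1) k T = univ.filter fun w => twosCount w = k ∧ ∀ i ∈ T, w i ≠ 0 from rfl,
      card_fiber v]
    congr 1
    apply Finset.filter_congr
    intro u _
    rw [twos_cons, cons_constraint]
  have h2 : (univ.filter fun u : Fin N → Fin 3 =>
      ((if (2:Fin 3) = 2 then 1 else 0) + twosCount u = k) ∧
      (((0 : Fin (N+1)) ∈ T → (2:Fin 3) ≠ 0) ∧ ∀ i ∈ T', u i ≠ 0)).card = (Bset N k T').card := by
    congr 1
    apply Finset.filter_congr
    intro u _
    simp [Bset, add_comm, show (2:Fin 3) ≠ 0 by decide]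
  have h1 : (univ.filter fun u : Fin N → Fin 3 =>
      ((if (1:Fin 3) = 2 then 1 else 0) + twosCount u = k) ∧
      (((0 : Fin (N+1)) ∈ T → (1:Fin 3) ≠ 0) ∧ ∀ i ∈ T', u i ≠ 0)).card = (Wset N k T').card := by
    congr 1
    apply Finset.filter_congr
    intro u _
    simp [Wset, show (1:Fin 3) ≠ 2 by decide, show (1:Fin 3) ≠ 0 by decide]
  by_cases h0 : (0 : Fin (N+1)) ∈ T
  · have hz : (univ.filter fun u : Fin N → Fin 3 =>
        ((if (0:Fin 3) = 2 then 1 else 0) + twosCount u = k) ∧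
        (((0 : Fin (N+1)) ∈ T → (0:Fin 3) ≠ 0) ∧ ∀ i ∈ T', u i ≠ 0)).card = 0 := by
      rw [Finset.card_eq_zero]
      apply Finset.filter_false_of_mem
      intro u _
      simp [h0]
    rw [hsplit, Fin.sum_univ_three, hval 0, hval 1, hval 2, hz, h1, h2, if_pos h0]
    ring
  · have hz : (univ.filter fun u : Fin N → Fin 3 =>
        ((if (0:Fin 3) = 2 then 1 else 0) + twosCount u = k) ∧
        (((0 : Fin (N+1)) ∈ T → (0:Fin 3) ≠ 0) ∧ ∀ i ∈ T', u i ≠ 0)).card = (Wset N k T').card := by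
      congr 1
      apply Finset.filter_congr
      intro u _
      simp [Wset, h0, show (0:Fin 3) ≠ 2 by decide]
    rw [hsplit, Fin.sum_univ_three, hval 0, hval 1, hval 2, hz, h1, h2, if_neg h0]
    ring

lemma C_eq (m n k : ℕ) :
    C m n k = (Wset (m+n) k (univ.filter fun i : Fin (m+n) => (i : ℕ) < m)).card := by
  unfold C ternaryWords Wset twosCount
  congr 1
  apply Finset.filter_congr
  intro w _
  simp only [mem_filter, mem_univ, true_and, and_congr_right_iff]

lemma card_lt_filter (M c : ℕ) (h : c ≤ M) :
    (univ.filter fun i : Fin M => (i : ℕ) < c).card = c := by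
  conv_rhs => rw [← Finset.card_range c]
  refine Finset.card_bij (fun i _ => (i : ℕ)) ?_ ?_ ?_
  · intro a ha; simp only [mem_filter] at ha; simpa using ha.2
  · intro a _ b _ hab; exact Fin.ext hab
  · intro b hb
    simp only [Finset.mem_range] at hb
    exact ⟨⟨b, lt_of_lt_of_le hb h⟩, by simp [hb], rfl⟩

/-- The key recurrence `C m (n+1) k = C m n k + C (m+1) n k`. -/
lemma C_succ (m n k : ℕ) : C m (n+1) k = C m n k + C (m+1) n k := by
  have hC1 : C m (n+1) k
      = (Wset (m+n+1) k (univ.filter fun i : Fin (m+n+1) => (i : ℕ) < m)).card := C_eq m (n+1) k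
  have hC2 : C (m+1) n k
      = (Wset (m+n+1) k (univ.filter fun i : Fin (m+n+1) => (i : ℕ) < m+1)).card := by
    have := C_eq (m+1) n k
    rwa [Nat.add_right_comm m 1 n] at this
  set S₁ : Finset (Fin (m+n+1)) := univ.filter fun i => (i : ℕ) < m with hS₁
  set T₁ : Finset (Fin (m+n+1)) :=
    (univ.filter fun i : Fin (m+n) => (i : ℕ) < m).image Fin.succ with hT₁
  have hT₁card : T₁.card = m := by
    rw [hT₁, Finset.card_image_of_injective _ (Fin.succ_injective _),
      card_lt_filter _ _ (Nat.le_add_right m n)]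
  have hS₁card : S₁.card = m := card_lt_filter _ _ (by omega)
  have hT₁0 : (0 : Fin (m+n+1)) ∉ T₁ := by
    rw [hT₁]
    intro h
    obtain ⟨x, _, hx0⟩ := Finset.mem_image.1 h
    exact Fin.succ_ne_zero x hx0
  have hT₁' : (univ.filter fun i : Fin (m+n) => i.succ ∈ T₁)
      = univ.filter fun i : Fin (m+n) => (i : ℕ) < m := by
    apply Finset.filter_congr
    intro i _
    rw [hT₁]
    simp only [Finset.mem_image, mem_filter, mem_univ, true_and]
    constructor
    · rintro ⟨j, hj, hji⟩
      rwa [← (Fin.succ_injective _) hji]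
    · intro h; exact ⟨i, h, rfl⟩
  have hS₂' : (univ.filter fun i : Fin (m+n) =>
        i.succ ∈ (univ.filter fun i : Fin (m+n+1) => (i : ℕ) < m+1))
      = univ.filter fun i : Fin (m+n) => (i : ℕ) < m := by
    apply Finset.filter_congr
    intro i _
    simp [Fin.val_succ]
  have split1 := Wset_card_split (m+n) k T₁
  have split2 := Wset_card_split (m+n) k (univ.filter fun i : Fin (m+n+1) => (i : ℕ) < m+1)
  rw [hT₁', if_neg hT₁0] at split1
  rw [hS₂', if_pos (by simp)] at split2
  rw [hC1, hC2, Wset_card_eq (m+n+1) k S₁ T₁ (by rw [hS₁card, hT₁card]), split1, split2,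
    C_eq m n k]
  ring

theorem stmt_11 (m n k p : ℕ) (hp : p ≤ n) :
    C m n k = ∑ i ∈ Finset.range (p + 1), p.choose i * C (m + i) (n - p) k := by
  induction p generalizing m with
  | zero => simp
  | succ p ih =>
    have h1 : p ≤ n := Nat.le_of_succ_le hp
    have hq : n - p = (n - (p+1)) + 1 := by omega
    have key : ∀ x : ℕ → ℕ,
        ∑ i ∈ range (p+1), p.choose i * (x i + x (i+1))
          = ∑ i ∈ range (p+1+1), (p+1).choose i * x i := by
      intro x
      rw [Finset.sum_range_succ' (fun i => (p+1).choose i * x i) (p+1)]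
      simp only [Nat.choose_succ_succ, Nat.add_mul, Nat.mul_add, Finset.sum_add_distrib,
        Nat.choose_zero_right, one_mul]
      rw [Finset.sum_range_succ' (fun i => p.choose i * x i) p,
          Finset.sum_range_succ (fun i => p.choose (i+1) * x (i+1)) p]
      simp only [Nat.choose_succ_self, Nat.zero_mul, Nat.add_zero, Nat.choose_zero_right, one_mul]
      ring
    rw [ih m h1]
    calc ∑ i ∈ range (p+1), p.choose i * C (m+i) (n-p) k
        = ∑ i ∈ range (p+1), p.choose i * (C (m+i) (n-(p+1)) k + C (m+(i+1)) (n-(p+1)) k) := by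
          apply Finset.sum_congr rfl
          intro i _
          rw [hq, C_succ (m+i) (n-(p+1)) k]
          rfl
      _ = ∑ i ∈ range (p+1+1), (p+1).choose i * C (m+i) (n-(p+1)) k :=
          key (fun i => C (m+i) (n-(p+1)) k)
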